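/- Let r ≥ 3 and let n ≥ 2 be an even integer with (n, r) ≠ (2, 3), and let χ(2, …, 2; n) denote χ evaluated at r copies of 2. Then χ(2, …, 2; n) > 2^r · (n + 1). Moreover, in the excluded case one has equality: χ(2, 2, 2; 2) = 24 = 2³·(2 + 1). -/
import Mathlib


/-- `hcomplete k d` is the complete homogeneous symmetric polynomial
`h_k(d₁,…,d_r) = ∑_{i₁+⋯+i_r=k} d₁^{i₁}⋯d_r^{i_r}` evaluated at the tuple `d`. -/
def hcomplete {r : ℕ} (k : ℕ) (d : Fin r → ℤ) : ℤ :=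
  ∑ f ∈ Finset.Nat.antidiagonalTuple r k, ∏ j, d j ^ f j

/-- `chi d n = d₁⋯d_r · ∑_{i=0}^{n} (−1)^{n−i} · binom(n+r+1, i) · h_{n−i}(d₁,…,d_r)`,
which by a theorem of Azuma is the degree of the top Chern class of an `n`-dimensional
smooth complete intersection of hypersurfaces of degrees `d₁,…,d_r` in `ℙ^{n+r}`. -/
def chi {r : ℕ} (d : Fin r → ℤ) (n : ℕ) : ℤ :=
  (∏ j, d j) * ∑ i ∈ Finset.range (n + 1),
    (-1) ^ (n - i) * ((n + r + 1).choose i : ℤ) * hcomplete (n - i) d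

open Finset

lemma list_range_sum (n : ℕ) (f : ℕ → ℕ) :
    ((List.range n).map f).sum = ∑ i ∈ Finset.range n, f i := by
  induction n with
  | zero => simp
  | succ n ih => rw [List.range_succ, List.map_append, List.sum_append,
      Finset.sum_range_succ, ih]; simp

lemma mc_sum (k n : ℕ) :
    ∑ j ∈ Finset.range (n+1), Nat.multichoose k j = Nat.multichoose (k+1) n := by
  induction n with
  | zero => simp [Nat.multichoose_zero_right]
  | succ n ih => rw [Finset.sum_range_succ, ih, Nat.multichoose_succ_succ, Nat.add_comm]

lemma adt_length : ∀ r k : ℕ, (List.Nat.antidiagonalTuple r k).length = Nat.multichoose r k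
  | 0, 0 => by simp [List.Nat.antidiagonalTuple]
  | 0, (k+1) => by simp [List.Nat.antidiagonalTuple]
  | (r+1), k => by
    show (List.flatMap _ _).length = _
    rw [List.length_flatMap]
    simp only [Function.comp_def, List.length_map]
    rw [List.Nat.antidiagonal, List.map_map]
    calc ((List.range (k+1)).map _).sum
        = ∑ i ∈ Finset.range (k+1), Nat.multichoose r (k - i) := by
          rw [list_range_sum]; exact Finset.sum_congr rfl fun i _ => adt_length r (k-i)
      _ = ∑ i ∈ Finset.range (k+1), Nat.multichoose r i := by
          rw [← Finset.sum_range_reflect]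
          refine Finset.sum_congr rfl fun i hi => ?_
          simp only [Nat.add_sub_cancel]
          rw [Nat.sub_sub_self (Nat.lt_succ_iff.mp (Finset.mem_range.mp hi))]
      _ = Nat.multichoose (r+1) k := mc_sum r k

lemma adt_card (r k : ℕ) : (Finset.Nat.antidiagonalTuple r k).card = Nat.multichoose r k := by
  rw [← adt_length r k]; rfl

lemma hconst (r k : ℕ) :
    hcomplete k (fun _ : Fin r => (2:ℤ)) = 2 ^ k * (Nat.multichoose r k : ℤ) := by
  unfold hcomplete
  have h : ∀ f ∈ Finset.Nat.antidiagonalTuple r k,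
      (∏ j : Fin r, (2:ℤ) ^ f j) = 2 ^ k := by
    intro f hf
    rw [Finset.prod_pow_eq_pow_sum]
    rw [Finset.Nat.mem_antidiagonalTuple.mp hf]
  rw [Finset.sum_congr rfl h, Finset.sum_const, adt_card]
  rw [nsmul_eq_mul, mul_comm]

/-- `S r n` is `χ(2,…,2;n)/2^r`, written with ascending binomial indices. -/
def S (r n : ℕ) : ℤ :=
  ∑ k ∈ Finset.range (n+1),
    (-1)^k * ((n+r+1).choose (r+1+k) : ℤ) * 2^k * (Nat.multichoose r k : ℤ)

lemma chi_eq (r n : ℕ) : chi (fun _ : Fin r => (2:ℤ)) n = 2^r * S r n := by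
  unfold chi S
  rw [Finset.prod_const]
  simp only [Finset.card_univ, Fintype.card_fin]
  congr 1
  rw [← Finset.sum_range_reflect]
  refine Finset.sum_congr rfl fun k hk => ?_
  have hk' : k ≤ n := Nat.lt_succ_iff.mp (Finset.mem_range.mp hk)
  simp only [Nat.add_sub_cancel]
  rw [Nat.sub_sub_self hk', hconst]
  have hb : (n + r + 1).choose (n - k) = (n + r + 1).choose (r + 1 + k) := by
    have : n + r + 1 - (n - k) = r + 1 + k := by omega
    rw [← Nat.choose_symm (by omega), this]
  rw [hb]; ring

lemma S_zero_left (n : ℕ) : S 0 n = (n:ℤ) + 1 := by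
  unfold S
  rw [Finset.sum_eq_single 0]
  · simp [Nat.choose_one_right]
  · intro k hk hk0
    obtain ⟨j, rfl⟩ := Nat.exists_eq_succ_of_ne_zero hk0
    simp [Nat.multichoose_zero_succ]
  · intro h; exact absurd (Finset.mem_range.mpr (Nat.succ_pos n)) h

lemma Srec (r n : ℕ) : S (r+1) (n+1) + S (r+1) n = S r (n+1) := by
  have hA : S (r+1) (n+1)
      = (∑ k ∈ Finset.range (n+2),
          (-1)^k * ((n+r+2).choose (r+1+k) : ℤ) * 2^k * (Nat.multichoose (r+1) k : ℤ))
      + (∑ k ∈ Finset.range (n+2),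
          (-1)^k * ((n+r+2).choose (r+1+k+1) : ℤ) * 2^k * (Nat.multichoose (r+1) k : ℤ)) := by
    unfold S
    rw [← Finset.sum_add_distrib]
    apply Finset.sum_congr rfl
    intro k _
    have h1 : n + 1 + (r+1) + 1 = (n+r+2)+1 := by omega
    have h2 : r + 1 + 1 + k = (r+1+k)+1 := by omega
    rw [h1, h2, Nat.choose_succ_succ]
    push_cast
    ring
  have hA2 : (∑ k ∈ Finset.range (n+2),
        (-1)^k * ((n+r+2).choose (r+1+k+1) : ℤ) * 2^k * (Nat.multichoose (r+1) k : ℤ))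
      = S (r+1) n := by
    rw [Finset.sum_range_succ]
    have hz : (n+r+2).choose (r+1+(n+1)+1) = 0 := Nat.choose_eq_zero_of_lt (by omega)
    rw [hz]
    unfold S
    push_cast
    simp only [Nat.cast_zero, mul_zero, zero_mul, add_zero]
    apply Finset.sum_congr rfl
    intro k _
    have h2 : n + (r+1) + 1 = n+r+2 := by omega
    have h3 : r + 1 + 1 + k = r+1+k+1 := by omega
    rw [h2, h3]
  have key : S r (n+1)
      - (∑ k ∈ Finset.range (n+2),
          (-1)^k * ((n+r+2).choose (r+1+k) : ℤ) * 2^k * (Nat.multichoose (r+1) k : ℤ))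
      = 2 * S (r+1) n := by
    unfold S
    have h1 : n + 1 + r + 1 = n+r+2 := by omega
    rw [h1, ← Finset.sum_sub_distrib, Finset.sum_range_succ']
    have hz : ((-1:ℤ))^0 * ((n+r+2).choose (r+1+0) : ℤ) * 2^0 * (Nat.multichoose r 0 : ℤ)
        - (-1)^0 * ((n+r+2).choose (r+1+0) : ℤ) * 2^0 * (Nat.multichoose (r+1) 0 : ℤ) = 0 := by
      simp [Nat.multichoose_zero_right]
    rw [hz, add_zero, Finset.mul_sum]
    apply Finset.sum_congr rfl
    intro k _
    have hmc : (Nat.multichoose (r+1) (k+1) : ℤ)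
        = (Nat.multichoose r (k+1) : ℤ) + (Nat.multichoose (r+1) k : ℤ) := by
      rw [Nat.multichoose_succ_succ]; push_cast; ring
    have h2 : n + (r+1) + 1 = n+r+2 := by omega
    have h3 : r + 1 + (k+1) = r+1+1+k := by omega
    rw [h2, h3] at *
    rw [hmc]
    push_cast
    ring
  linarith [hA, hA2, key]

/-- `R r n = 2^(r+1) · S r n` in closed positive form (for even `n`). -/
def R (r n : ℕ) : ℤ :=
  2*((n:ℤ)+1) + r + (-1)^n * ∑ k ∈ Finset.range r, ((r:ℤ) - k) * 2^k * ((n+k).choose k : ℤ)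

lemma geo (m : ℕ) : ∑ k ∈ Finset.range m, (2:ℤ)^k = 2^m - 1 := by
  induction m with
  | zero => simp
  | succ m ih => rw [Finset.sum_range_succ, ih]; ring

lemma Gsum (r : ℕ) : ∑ k ∈ Finset.range (r+1), ((r:ℤ)+1-k) * 2^k = 2^(r+2) - (r+3) := by
  induction r with
  | zero => simp
  | succ r ih =>
    have : ∀ k : ℕ, ((r:ℤ)+1+1-k) * 2^k = ((r:ℤ)+1-k) * 2^k + 2^k := by intro k; ring
    calc ∑ k ∈ Finset.range (r+2), ((r:ℤ)+1+1-k) * 2^k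
        = ∑ k ∈ Finset.range (r+2), (((r:ℤ)+1-k) * 2^k + 2^k) := by
          apply Finset.sum_congr rfl; intro k _; push_cast; ring
      _ = (∑ k ∈ Finset.range (r+2), ((r:ℤ)+1-k) * 2^k)
          + ∑ k ∈ Finset.range (r+2), (2:ℤ)^k := Finset.sum_add_distrib
      _ = (∑ k ∈ Finset.range (r+1), ((r:ℤ)+1-k) * 2^k) + ((r:ℤ)+1-(r+1))*2^(r+1)
          + ∑ k ∈ Finset.range (r+2), (2:ℤ)^k := by rw [Finset.sum_range_succ]; push_cast; ring
      _ = 2^(r+2) - (r+3) + 0 + (2^(r+2) - 1) := by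
          rw [ih, geo]; push_cast; ring_nf
      _ = 2^(r+3) - ((r:ℤ)+4) := by push_cast; ring

lemma Rid (r n : ℕ) : R (r+1) (n+1) + R (r+1) n = 2 * R r (n+1) := by
  have key2 : (∑ k ∈ Finset.range (r+1), ((r:ℤ)+1-k)*2^k*((n+1+k).choose k : ℤ))
      - (∑ k ∈ Finset.range (r+1), ((r:ℤ)+1-k)*2^k*((n+k).choose k : ℤ))
      = 2 * ∑ k ∈ Finset.range r, ((r:ℤ)-k)*2^k*((n+1+k).choose k : ℤ) := by
    rw [← Finset.sum_sub_distrib]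
    have hsplit : ∀ k ∈ Finset.range (r+1),
        ((r:ℤ)+1-k)*2^k*((n+1+k).choose k : ℤ) - ((r:ℤ)+1-k)*2^k*((n+k).choose k : ℤ)
        = ((r:ℤ)+1-k)*2^k*(((n+1+k).choose k : ℤ) - ((n+k).choose k : ℤ)) := by
      intro k _; ring
    rw [Finset.sum_congr rfl hsplit, Finset.sum_range_succ']
    have h0 : ((r:ℤ)+1-(0:ℕ))*2^(0:ℕ)*(((n+1+0).choose 0 : ℤ) - ((n+0).choose 0 : ℤ)) = 0 := by
      simp
    rw [h0, add_zero, Finset.mul_sum]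
    apply Finset.sum_congr rfl
    intro k _
    have hp : (n+1+(k+1)).choose (k+1) = (n+1+k).choose k + (n+(k+1)).choose (k+1) := by
      have h1 : n+1+(k+1) = (n+k+1)+1 := by omega
      have h2 : n+1+k = n+k+1 := by omega
      have h3 : n+(k+1) = n+k+1 := by omega
      rw [h1, h2, h3, Nat.choose_succ_succ]
    rw [hp]
    push_cast
    ring
  unfold R
  push_cast
  linear_combination (-1:ℤ)^(n+1) * key2

lemma SR : ∀ r n : ℕ, 2^(r+1) * S r n = R r n := by
  intro r
  induction r with
  | zero =>
    intro n
    rw [S_zero_left]; unfold R; simp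
  | succ r ihr =>
    intro n
    induction n with
    | zero =>
      have hS : S (r+1) 0 = 1 := by
        unfold S
        rw [Finset.sum_range_one]
        have h1 : 0 + (r+1) + 1 = r + 2 := by omega
        have h2 : r + 1 + 1 + 0 = r + 2 := by omega
        rw [h1, h2, Nat.choose_self]
        simp [Nat.multichoose_zero_right]
      rw [hS, mul_one]
      unfold R
      have hsum : ∑ k ∈ Finset.range (r+1), (((r:ℤ)+1) - k)*2^k*(((0+k).choose k : ℤ))
          = 2^(r+2) - ((r:ℤ)+3) := by
        rw [← Gsum r]
        apply Finset.sum_congr rfl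
        intro k _
        have : (0+k).choose k = 1 := by rw [Nat.zero_add, Nat.choose_self]
        rw [this]; push_cast; ring
      push_cast
      rw [hsum]
      ring
    | succ n ihn =>
      have hrec := Srec r n
      have h1 := ihr (n+1)
      have h3 := Rid r n
      linear_combination 2^(r+1+1) * hrec + 2 * h1 - ihn - h3

lemma choose_diag_mono (n a b : ℕ) (hab : a ≤ b) : (n+a).choose a ≤ (n+b).choose b := by
  induction b, hab using Nat.le_induction with
  | base => exact le_refl _
  | succ b hb ih =>
    refine le_trans ih ?_
    have h1 : n+(b+1) = (n+b)+1 := by omega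
    rw [h1, Nat.choose_succ_succ]
    exact Nat.le_add_right _ _

lemma choose_ge (n k : ℕ) : n+1 ≤ (n+(k+1)).choose (k+1) := by
  have h := choose_diag_mono n 1 (k+1) (by omega)
  rwa [Nat.choose_one_right] at h

lemma twoC2 (n : ℕ) : 2 * ((n+2).choose 2) = (n+1)*(n+2) := by
  induction n with
  | zero => decide
  | succ n ih =>
    have e : n+1+2 = (n+2)+1 := by omega
    rw [e, Nat.choose_succ_succ, Nat.choose_one_right]
    nlinarith [ih]

lemma R_gt (s n : ℕ) (hn : 2 ≤ n) (hne : n = 2 → 1 ≤ s) (heven : Even n) :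
    2^(s+4) * ((n:ℤ)+1) < R (s+3) n := by
  unfold R
  have hsign : ((-1:ℤ))^n = 1 := Even.neg_one_pow heven
  rw [hsign, one_mul]
  rw [Finset.sum_range_succ, Finset.sum_range_succ']
  have hmid : ∑ k ∈ Finset.range (s+1),
        (((s+3:ℕ):ℤ) - ((k+1:ℕ):ℤ)) * 2^(k+1) * (((n+(k+1)).choose (k+1) : ℤ))
      ≥ ∑ k ∈ Finset.range (s+1), (2:ℤ)^(k+2) * ((n:ℤ)+1) := by
    apply Finset.sum_le_sum
    intro k hk
    have hks : k ≤ s := Nat.lt_succ_iff.mp (Finset.mem_range.mp hk)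
    have hc : (2:ℤ) ≤ ((s+3:ℕ):ℤ) - ((k+1:ℕ):ℤ) := by push_cast; omega
    have hch : ((n:ℤ)+1) ≤ (((n+(k+1)).choose (k+1) : ℤ)) := by
      have := choose_ge n k
      exact_mod_cast this
    have hp : (0:ℤ) < 2^(k+1) := by positivity
    have hn1 : (0:ℤ) < (n:ℤ)+1 := by positivity
    calc (2:ℤ)^(k+2) * ((n:ℤ)+1) = 2 * 2^(k+1) * ((n:ℤ)+1) := by ring
      _ ≤ (((s+3:ℕ):ℤ) - ((k+1:ℕ):ℤ)) * 2^(k+1) * ((n:ℤ)+1) := by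
          apply mul_le_mul_of_nonneg_right _ (le_of_lt hn1)
          exact mul_le_mul_of_nonneg_right hc (le_of_lt hp)
      _ ≤ (((s+3:ℕ):ℤ) - ((k+1:ℕ):ℤ)) * 2^(k+1) * (((n+(k+1)).choose (k+1) : ℤ)) := by
          apply mul_le_mul_of_nonneg_left hch
          nlinarith
  have hmidsum : ∑ k ∈ Finset.range (s+1), (2:ℤ)^(k+2) * ((n:ℤ)+1)
      = 4*((n:ℤ)+1)*(2^(s+1)-1) := by
    have : ∀ k ∈ Finset.range (s+1), (2:ℤ)^(k+2) * ((n:ℤ)+1) = 4*((n:ℤ)+1) * 2^k := by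
      intro k _; ring
    rw [Finset.sum_congr rfl this, ← Finset.mul_sum, geo]
  have hlast : (((s+3:ℕ):ℤ) - ((s+2:ℕ):ℤ)) * 2^(s+2) * (((n+(s+2)).choose (s+2) : ℤ))
      ≥ 2^(s+1) * ((n:ℤ)+1) * ((n:ℤ)+2) := by
    have h1 : ((n+2).choose 2 : ℤ) ≤ ((n+(s+2)).choose (s+2) : ℤ) := by
      exact_mod_cast choose_diag_mono n 2 (s+2) (by omega)
    have h2 : 2 * ((n+2).choose 2 : ℤ) = ((n:ℤ)+1)*((n:ℤ)+2) := by
      have h := twoC2 n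
      have h' : ((2 * ((n+2).choose 2) : ℕ) : ℤ) = (((n+1)*(n+2) : ℕ) : ℤ) := by
        exact_mod_cast congrArg (fun x : ℕ => (x : ℤ)) h
      push_cast at h'
      linarith
    have hc1 : (((s+3:ℕ):ℤ) - ((s+2:ℕ):ℤ)) = 1 := by push_cast; ring
    rw [hc1, one_mul]
    have hp : (0:ℤ) < 2^(s+1) := by positivity
    calc (2:ℤ)^(s+1) * ((n:ℤ)+1) * ((n:ℤ)+2)
        = 2^(s+1) * (2 * ((n+2).choose 2 : ℤ)) := by rw [h2]; ring
      _ ≤ 2^(s+1) * (2 * ((n+(s+2)).choose (s+2) : ℤ)) := by nlinarith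
      _ = 2^(s+2) * ((n+(s+2)).choose (s+2) : ℤ) := by ring
  have hf0 : (((s+3:ℕ):ℤ) - ((0:ℕ):ℤ)) * 2^(0:ℕ) * (((n+0).choose 0 : ℤ)) = (s:ℤ)+3 := by
    simp
  have hcase : 2*(s:ℤ) + 6 - 2*((n:ℤ)+1) + 2^(s+1)*((n:ℤ)+1)*((n:ℤ)-2) > 0 := by
    rcases eq_or_lt_of_le hn with h2 | h3
    · have hs1 : 1 ≤ s := hne h2.symm
      rw [← h2]
      have : ((2:ℕ):ℤ) = 2 := by norm_num
      rw [this]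
      have : (1:ℤ) ≤ (s:ℤ) := by exact_mod_cast hs1
      nlinarith
    · have hn3 : (3:ℤ) ≤ (n:ℤ) := by exact_mod_cast h3
      have h2s : (2:ℤ) ≤ 2^(s+1) := by
        calc (2:ℤ) = 2^1 := by norm_num
          _ ≤ 2^(s+1) := pow_le_pow_right₀ (by norm_num) (by omega)
      have ha : (0:ℤ) ≤ ((n:ℤ)+1)*((n:ℤ)-2) := by nlinarith
      have hx := mul_le_mul_of_nonneg_right h2s ha
      nlinarith [hx, hn3]
  have hpow : (2:ℤ)^(s+4) = 8 * 2^(s+1) := by ring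
  push_cast at *
  nlinarith [hmid, hmidsum, hlast, hcase]


/-- For `r ≥ 3` and even `n ≥ 2` with `(n, r) ≠ (2, 3)`, with `χ(2,…,2; n)` denoting
`χ` at `r` copies of `2`: `χ(2,…,2; n) > 2^r·(n + 1)`; moreover in the excluded case
there is equality `χ(2, 2, 2; 2) = 24 = 2³·(2 + 1)`. -/
theorem chi_quadrics_lower_bound :
    (∀ r n : ℕ, 3 ≤ r → 2 ≤ n → Even n → ((n : ℕ), (r : ℕ)) ≠ (2, 3) →
      (2 : ℤ) ^ r * ((n : ℤ) + 1) < chi (fun _ : Fin r => (2 : ℤ)) n) ∧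
    chi (fun _ : Fin 3 => (2 : ℤ)) 2 = 24 ∧ (24 : ℤ) = 2 ^ 3 * (2 + 1) := by
  refine ⟨?_, ?_, by norm_num⟩
  · intro r n hr hn heven hne
    obtain ⟨s, rfl⟩ : ∃ s, r = s + 3 := ⟨r - 3, by omega⟩
    have hR := R_gt s n hn (fun h2 => by
      by_contra hs
      exact hne (by simp [h2]; omega)) heven
    have hSR := SR (s+3) n
    have hpos4 : (0:ℤ) < 2^(s+4) := by positivity
    have hS : (n:ℤ) + 1 < S (s+3) n := by
      have heq : (2:ℤ)^(s+4) * S (s+3) n = R (s+3) n := by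
        rw [← hSR]
      have : 2^(s+4) * ((n:ℤ)+1) < 2^(s+4) * S (s+3) n := by rw [heq]; exact hR
      exact lt_of_mul_lt_mul_left this (le_of_lt hpos4)
    rw [chi_eq]
    have hpos3 : (0:ℤ) < 2^(s+3) := by positivity
    exact (mul_lt_mul_iff_right₀ hpos3).mpr hS
  · rw [chi_eq]
    have h := SR 3 2
    have hR : R 3 2 = 48 := by
      unfold R
      rw [Finset.sum_range_succ, Finset.sum_range_succ, Finset.sum_range_one]
      norm_num [Nat.choose]
    rw [hR] at h
    norm_num at h
    have : S 3 2 = 3 := by omega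
    rw [this]
    norm_num
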